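/- Let n : ℕ and let R be a finite list of words in n generators, and let G be the finitely presented group PresentedGroup S, where S ⊆ FreeGroup (Fin n) is the set of elements determined by R. Then the predicate on lists of words X asserting that the subgroup Subgroup.closure T of G is normal, where T is the set of elements of G represented by the words in X (equivalently, asserting Subgroup.closure T = Subgroup.normalClosure T), satisfies REPred. -/

import Mathlib

/-- The set of relators in the free group determined by a list of words. -/
def relsOf {α : Type} (R : List (List (α × Bool))) : Set (FreeGroup α) :=
  {x | ∃ r ∈ R, x = FreeGroup.mk r}

/-- The element of the presented group represented by a word. -/
def wordElt {α : Type} (R : List (List (α × Bool))) (w : List (α × Bool)) :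
    PresentedGroup (relsOf R) :=
  PresentedGroup.mk (relsOf R) (FreeGroup.mk w)

namespace NormRE

variable {α : Type} {β : Type}

/-- concatenation of blocks -/
def evalP (f : β → List (α × Bool)) (L : List β) : List (α × Bool) := (L.map f).flatten

theorem evalP_nil (f : β → List (α × Bool)) : evalP f [] = [] := rfl

theorem evalP_cons (f : β → List (α × Bool)) (p : β) (L : List β) :
    evalP f (p :: L) = f p ++ evalP f L := by simp [evalP]

theorem evalP_append (f : β → List (α × Bool)) (L₁ L₂ : List β) :
    evalP f (L₁ ++ L₂) = evalP f L₁ ++ evalP f L₂ := by simp [evalP]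

theorem mk_evalP_rev (f : β → List (α × Bool)) (neg : β → β)
    (h : ∀ p, FreeGroup.mk (f (neg p)) = (FreeGroup.mk (f p))⁻¹) (L : List β) :
    FreeGroup.mk (evalP f (L.reverse.map neg)) = (FreeGroup.mk (evalP f L))⁻¹ := by
  induction L with
  | nil => simp [evalP]
  | cons p L ih =>
    rw [List.reverse_cons, List.map_append, evalP_append, ← FreeGroup.mul_mk, ih, evalP_cons,
      ← FreeGroup.mul_mk]
    simp only [evalP, List.map_cons, List.map_nil, List.flatten_cons, List.flatten_nil,
      List.append_nil, h p, mul_inv_rev]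

/-- membership → existence of certificate -/
theorem exists_evalP (f : β → List (α × Bool)) (neg : β → β)
    (h : ∀ p, FreeGroup.mk (f (neg p)) = (FreeGroup.mk (f p))⁻¹)
    {s : Set (FreeGroup α)} (hs : ∀ x ∈ s, ∃ L, x = FreeGroup.mk (evalP f L)) :
    ∀ x ∈ Subgroup.closure s, ∃ L, x = FreeGroup.mk (evalP f L) := by
  intro x hx
  induction hx using Subgroup.closure_induction with
  | mem x hx => exact hs x hx
  | one => exact ⟨[], rfl⟩
  | mul x y _ _ hx hy =>
    obtain ⟨L₁, rfl⟩ := hx; obtain ⟨L₂, rfl⟩ := hy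
    exact ⟨L₁ ++ L₂, by rw [evalP_append, ← FreeGroup.mul_mk]⟩
  | inv x _ hx =>
    obtain ⟨L, rfl⟩ := hx
    exact ⟨L.reverse.map neg, by rw [mk_evalP_rev f neg h]⟩

/-- certificate → membership -/
theorem evalP_mem (f : β → List (α × Bool)) {H : Subgroup (FreeGroup α)}
    (hf : ∀ p, FreeGroup.mk (f p) ∈ H) (L : List β) : FreeGroup.mk (evalP f L) ∈ H := by
  induction L with
  | nil => exact (FreeGroup.one_eq_mk.symm ▸ H.one_mem :)
  | cons p L ih => rw [evalP_cons, ← FreeGroup.mul_mk]; exact H.mul_mem (hf p) ih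

def fComb (X : List (List (α × Bool))) (p : ℕ × Bool) : List (α × Bool) :=
  cond p.2 (X.getD p.1 []) (FreeGroup.invRev (X.getD p.1 []))

def fConj (R : List (List (α × Bool))) (t : List (α × Bool) × ℕ × Bool) : List (α × Bool) :=
  t.1 ++ (cond t.2.2 (R.getD t.2.1 []) (FreeGroup.invRev (R.getD t.2.1 []))) ++
    FreeGroup.invRev t.1

theorem fComb_neg (X : List (List (α × Bool))) (p : ℕ × Bool) :
    FreeGroup.mk (fComb X (p.1, !p.2)) = (FreeGroup.mk (fComb X p))⁻¹ := by
  obtain ⟨j, b⟩ := p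
  cases b <;> simp [fComb, FreeGroup.inv_mk, FreeGroup.invRev_invRev]

theorem fConj_neg (R : List (List (α × Bool))) (t : List (α × Bool) × ℕ × Bool) :
    FreeGroup.mk (fConj R (t.1, t.2.1, !t.2.2)) = (FreeGroup.mk (fConj R t))⁻¹ := by
  obtain ⟨c, j, b⟩ := t
  cases b <;>
    simp [fConj, ← FreeGroup.mul_mk, ← FreeGroup.inv_mk, FreeGroup.invRev_invRev,
      mul_inv_rev, mul_assoc]

theorem mk_eq_one_iff [DecidableEq α] {L : List (α × Bool)} : FreeGroup.mk L = 1 ↔ FreeGroup.reduce L = [] := by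
  rw [← FreeGroup.toWord_eq_nil_iff, FreeGroup.toWord_mk]


section Member

variable {α : Type} [DecidableEq α]

theorem getD_mem_or_nil (X : List (List (α × Bool))) (j : ℕ) :
    X.getD j [] ∈ X ∨ X.getD j [] = [] := by
  by_cases h : j < X.length
  · left; rw [List.getD_eq_getElem _ _ h]; exact List.getElem_mem h
  · right; exact List.getD_eq_default _ _ (le_of_not_gt h)

theorem mk_fComb_mem (X : List (List (α × Bool))) (p : ℕ × Bool) :
    FreeGroup.mk (fComb X p) ∈ Subgroup.closure {y | ∃ u ∈ X, y = FreeGroup.mk u} := by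
  have hu : FreeGroup.mk (X.getD p.1 []) ∈
      Subgroup.closure {y : FreeGroup α | ∃ u ∈ X, y = FreeGroup.mk u} := by
    rcases getD_mem_or_nil X p.1 with h | h
    · exact Subgroup.subset_closure ⟨_, h, rfl⟩
    · rw [h, ← FreeGroup.one_eq_mk]; exact Subgroup.one_mem _
  obtain ⟨j, b⟩ := p
  cases b
  · simpa [fComb, ← FreeGroup.inv_mk] using Subgroup.inv_mem _ hu
  · simpa [fComb] using hu

theorem mk_fConj_mem (R : List (List (α × Bool))) (t : List (α × Bool) × ℕ × Bool) :
    FreeGroup.mk (fConj R t) ∈ Subgroup.normalClosure (relsOf R) := by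
  obtain ⟨c, j, b⟩ := t
  have hr : FreeGroup.mk (cond b (R.getD j []) (FreeGroup.invRev (R.getD j []))) ∈
      Subgroup.normalClosure (relsOf R) := by
    have hu : FreeGroup.mk (R.getD j []) ∈ Subgroup.normalClosure (relsOf R) := by
      rcases getD_mem_or_nil R j with h | h
      · exact Subgroup.subset_normalClosure ⟨_, h, rfl⟩
      · rw [h, ← FreeGroup.one_eq_mk]; exact Subgroup.one_mem _
    cases b
    · simpa [← FreeGroup.inv_mk] using Subgroup.inv_mem _ hu
    · simpa using hu
  have : FreeGroup.mk (fConj R (c, j, b)) =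
      FreeGroup.mk c * FreeGroup.mk (cond b (R.getD j []) (FreeGroup.invRev (R.getD j []))) *
        (FreeGroup.mk c)⁻¹ := by
    simp [fConj, ← FreeGroup.mul_mk, FreeGroup.inv_mk, mul_assoc]
  rw [this]
  exact (Subgroup.normalClosure_normal).conj_mem _ hr _

theorem exists_comb {X : List (List (α × Bool))} {z : FreeGroup α}
    (hz : z ∈ Subgroup.closure {y : FreeGroup α | ∃ u ∈ X, y = FreeGroup.mk u}) :
    ∃ L, z = FreeGroup.mk (evalP (fComb X) L) := by
  refine exists_evalP (fComb X) (fun p => (p.1, !p.2)) (fComb_neg X) ?_ z hz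
  rintro x ⟨u, hu, rfl⟩
  obtain ⟨j, hj, rfl⟩ := List.mem_iff_getElem.1 hu
  refine ⟨[(j, true)], ?_⟩
  simp [evalP, fComb, List.getD, List.getElem?_eq_getElem hj]

theorem exists_conj {R : List (List (α × Bool))} {z : FreeGroup α}
    (hz : z ∈ Subgroup.normalClosure (relsOf R)) :
    ∃ M, z = FreeGroup.mk (evalP (fConj R) M) := by
  refine exists_evalP (fConj R) (fun t => (t.1, t.2.1, !t.2.2)) (fConj_neg R) ?_ z hz
  rintro x hx
  rw [Group.mem_conjugatesOfSet_iff] at hx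
  obtain ⟨a, ⟨r, hr, rfl⟩, hconj⟩ := hx
  obtain ⟨c, rfl⟩ := isConj_iff.1 hconj
  obtain ⟨j, hj, rfl⟩ := List.mem_iff_getElem.1 hr
  refine ⟨[(c.toWord, j, true)], ?_⟩
  simp [evalP, fConj, List.getD, List.getElem?_eq_getElem hj, ← FreeGroup.mul_mk,
    ← FreeGroup.inv_mk, FreeGroup.mk_toWord, mul_assoc]

theorem mem_closure_iff (R X : List (List (α × Bool))) (w : List (α × Bool)) :
    wordElt R w ∈ Subgroup.closure {x | ∃ u ∈ X, x = wordElt R u} ↔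
      ∃ L M, FreeGroup.reduce (FreeGroup.invRev w ++ evalP (fComb X) L ++
        FreeGroup.invRev (evalP (fConj R) M)) = [] := by
  have hT : {x | ∃ u ∈ X, x = wordElt R u} =
      (PresentedGroup.mk (relsOf R)) '' {y | ∃ u ∈ X, y = FreeGroup.mk u} := by
    ext x
    constructor
    · rintro ⟨u, hu, rfl⟩; exact ⟨FreeGroup.mk u, ⟨u, hu, rfl⟩, rfl⟩
    · rintro ⟨y, ⟨u, hu, rfl⟩, rfl⟩; exact ⟨u, hu, rfl⟩
  have hK : Subgroup.closure {x | ∃ u ∈ X, x = wordElt R u} =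
      Subgroup.map (PresentedGroup.mk (relsOf R))
        (Subgroup.closure {y | ∃ u ∈ X, y = FreeGroup.mk u}) := by
    rw [hT, MonoidHom.map_closure]
  rw [hK]
  constructor
  · intro h
    obtain ⟨z, hz, hπ⟩ := Subgroup.mem_map.1 h
    obtain ⟨L, rfl⟩ := exists_comb hz
    have hmem : (FreeGroup.mk w)⁻¹ * FreeGroup.mk (evalP (fComb X) L) ∈
        Subgroup.normalClosure (relsOf R) :=
      QuotientGroup.eq.1 (show ((FreeGroup.mk w : FreeGroup α) :
        FreeGroup α ⧸ Subgroup.normalClosure (relsOf R)) =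
        ↑(FreeGroup.mk (evalP (fComb X) L)) from hπ.symm)
    obtain ⟨M, hM⟩ := exists_conj hmem
    refine ⟨L, M, mk_eq_one_iff.1 ?_⟩
    rw [← FreeGroup.mul_mk, ← FreeGroup.mul_mk, ← FreeGroup.inv_mk, ← FreeGroup.inv_mk, ← hM]
    group
  · rintro ⟨L, M, hred⟩
    have h1 := mk_eq_one_iff.2 hred
    rw [← FreeGroup.mul_mk, ← FreeGroup.mul_mk, ← FreeGroup.inv_mk, ← FreeGroup.inv_mk] at h1
    have h2 : (FreeGroup.mk w)⁻¹ * FreeGroup.mk (evalP (fComb X) L) =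
        FreeGroup.mk (evalP (fConj R) M) := by
      rw [← inv_inv (FreeGroup.mk (evalP (fConj R) M))]
      exact mul_eq_one_iff_eq_inv.mp h1
    have h4 := congrArg (PresentedGroup.mk (relsOf R)) h2
    rw [map_mul, map_inv] at h4
    have h5 : PresentedGroup.mk (relsOf R) (FreeGroup.mk (evalP (fConj R) M)) = 1 :=
      (QuotientGroup.eq_one_iff _).2 (evalP_mem _ (mk_fConj_mem R) M)
    rw [h5] at h4
    have h3 : wordElt R w = PresentedGroup.mk (relsOf R) (FreeGroup.mk (evalP (fComb X) L)) :=
      inv_mul_eq_one.mp h4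
    rw [h3]
    exact Subgroup.mem_map_of_mem _ (evalP_mem _ (mk_fComb_mem X) L)

end Member

section Goals

variable {n : ℕ}

/-- all signed generators -/
def prs (n : ℕ) : List (Fin n × Bool) :=
  (List.finRange n).flatMap fun i => [(i, true), (i, false)]

theorem mem_prs (q : Fin n × Bool) : q ∈ prs n := by
  obtain ⟨i, b⟩ := q
  cases b <;> simp [prs, List.mem_flatMap]

/-- the list of conjugates of generators by signed generators -/
def goals (X : List (List (Fin n × Bool))) : List (List (Fin n × Bool)) :=
  (X.map fun u => (prs n).map fun q => q :: (u ++ [(q.1, !q.2)])).flatten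

theorem mem_goals {w : List (Fin n × Bool)} {X : List (List (Fin n × Bool))} :
    w ∈ goals X ↔ ∃ u ∈ X, ∃ q : Fin n × Bool, w = q :: (u ++ [(q.1, !q.2)]) := by
  simp only [goals, List.mem_flatten, List.mem_map]
  constructor
  · rintro ⟨l, ⟨u, hu, rfl⟩, hw⟩
    obtain ⟨q, _, rfl⟩ := List.mem_map.1 hw
    exact ⟨u, hu, q, rfl⟩
  · rintro ⟨u, hu, q, rfl⟩
    exact ⟨_, ⟨u, hu, rfl⟩, List.mem_map.2 ⟨q, mem_prs q, rfl⟩⟩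

theorem mk_conj_word (u : List (Fin n × Bool)) (q : Fin n × Bool) :
    (FreeGroup.mk (q :: (u ++ [(q.1, !q.2)])) : FreeGroup (Fin n)) =
      FreeGroup.mk [q] * FreeGroup.mk u * (FreeGroup.mk [q])⁻¹ := by
  rw [FreeGroup.inv_mk]
  have : FreeGroup.invRev [q] = [(q.1, !q.2)] := by simp [FreeGroup.invRev]
  rw [this, FreeGroup.mul_mk, FreeGroup.mul_mk]
  simp

theorem normal_iff (R X : List (List (Fin n × Bool))) :
    (Subgroup.closure {x | ∃ u ∈ X, x = wordElt R u}).Normal ↔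
      ∀ w ∈ goals X, wordElt R w ∈ Subgroup.closure {x | ∃ u ∈ X, x = wordElt R u} := by
  set K := Subgroup.closure {x | ∃ u ∈ X, x = wordElt R u} with hKdef
  constructor
  · intro hN w hw
    obtain ⟨u, hu, q, rfl⟩ := mem_goals.1 hw
    have : wordElt R (q :: (u ++ [(q.1, !q.2)])) =
        PresentedGroup.mk (relsOf R) (FreeGroup.mk [q]) * wordElt R u *
          (PresentedGroup.mk (relsOf R) (FreeGroup.mk [q]))⁻¹ := by
      rw [wordElt, mk_conj_word, map_mul, map_mul, map_inv]; rfl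
    rw [this]
    exact hN.conj_mem _ (Subgroup.subset_closure ⟨u, hu, rfl⟩) _
  · intro h
    have key : ∀ (q : Fin n × Bool) (x : PresentedGroup (relsOf R)), x ∈ K →
        PresentedGroup.mk (relsOf R) (FreeGroup.mk [q]) * x *
          (PresentedGroup.mk (relsOf R) (FreeGroup.mk [q]))⁻¹ ∈ K := by
      intro q x hx
      set g := PresentedGroup.mk (relsOf R) (FreeGroup.mk [q]) with hg
      have hmap : Subgroup.map (MulAut.conj g).toMonoidHom K ≤ K := by
        rw [hKdef, MonoidHom.map_closure]
        apply Subgroup.closure_le _ |>.2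
        rintro y ⟨t, ⟨u, hu, rfl⟩, rfl⟩
        have : (MulAut.conj g).toMonoidHom (wordElt R u) = wordElt R (q ::
            (u ++ [(q.1, !q.2)])) := by
          simp only [wordElt, mk_conj_word, map_mul, map_inv,
            MulEquiv.coe_toMonoidHom, MulAut.conj_apply, hg]
        rw [this]
        exact h _ (mem_goals.2 ⟨u, hu, q, rfl⟩)
      exact hmap (Subgroup.mem_map_of_mem _ hx)
    have hinv : ∀ (j : Fin n),
        (PresentedGroup.mk (relsOf R) (FreeGroup.mk [(j, true)]))⁻¹ =
          PresentedGroup.mk (relsOf R) (FreeGroup.mk [(j, false)]) := by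
      intro j
      rw [← map_inv, FreeGroup.inv_mk]
      simp [FreeGroup.invRev]
    rw [← Subgroup.normalizer_eq_top_iff]
    rw [eq_top_iff]
    intro x _
    refine PresentedGroup.generated_by (relsOf R) (Subgroup.normalizer (K : Set (PresentedGroup (relsOf R)))) ?_ x
    intro j
    rw [Subgroup.mem_normalizer_iff]
    intro y
    have hof : (PresentedGroup.of j : PresentedGroup (relsOf R)) =
        PresentedGroup.mk (relsOf R) (FreeGroup.mk [(j, true)]) := rfl
    constructor
    · intro hy
      rw [hof]
      exact key (j, true) y hy
    · intro hy
      rw [hof] at hy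
      have h2 := key (j, false) _ hy
      rw [← hinv j] at h2
      convert h2 using 1
      group

/-- the result of one certificate entry -/
def res (R X : List (List (Fin n × Bool)))
    (t : List (Fin n × Bool) × List (ℕ × Bool) × List (List (Fin n × Bool) × ℕ × Bool)) :
    List (Fin n × Bool) × List (Fin n × Bool) :=
  (t.1, FreeGroup.reduce (FreeGroup.invRev t.1 ++ evalP (fComb X) t.2.1 ++
    FreeGroup.invRev (evalP (fConj R) t.2.2)))

/-- the whole certificate checker -/
def check (R X : List (List (Fin n × Bool)))
    (c : List (List (Fin n × Bool) × List (ℕ × Bool) ×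
      List (List (Fin n × Bool) × ℕ × Bool))) : Bool :=
  decide (c.map (res R X) = (goals X).map fun w => (w, ([] : List (Fin n × Bool))))

theorem main_iff (R X : List (List (Fin n × Bool))) :
    (Subgroup.closure {x | ∃ u ∈ X, x = wordElt R u} =
        Subgroup.normalClosure {x | ∃ u ∈ X, x = wordElt R u}) ↔
      ∃ c, check R X c = true := by
  have h1 : (Subgroup.closure {x | ∃ u ∈ X, x = wordElt R u} =
      Subgroup.normalClosure {x | ∃ u ∈ X, x = wordElt R u}) ↔
      (Subgroup.closure {x | ∃ u ∈ X, x = wordElt R u}).Normal := by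
    constructor
    · intro h; rw [h]; exact Subgroup.normalClosure_normal
    · intro h
      exact le_antisymm Subgroup.closure_le_normalClosure
        (@Subgroup.normalClosure_le_normal _ _ _ _ h Subgroup.subset_closure)
  rw [h1, normal_iff R X]
  constructor
  · intro h
    have h' : ∀ w ∈ goals X, ∃ L M, FreeGroup.reduce (FreeGroup.invRev w ++
        evalP (fComb X) L ++ FreeGroup.invRev (evalP (fConj R) M)) = [] := by
      intro w hw
      exact (mem_closure_iff R X w).1 (h w hw)
    refine ⟨(goals X).attach.map (fun w => (w.1, ((h' w.1 w.2).choose,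
      ((h' w.1 w.2).choose_spec).choose))), ?_⟩
    simp only [check, decide_eq_true_eq]
    apply List.ext_getElem
    · simp
    · intro k hk1 hk2
      simp only [List.getElem_map, List.getElem_attach, res]
      rw [((h' _ _).choose_spec).choose_spec]
      exact List.getElem_mem _
  · rintro ⟨c, hc⟩
    simp only [check, decide_eq_true_eq] at hc
    intro w hw
    rw [mem_closure_iff R X w]
    obtain ⟨k, hk, rfl⟩ := List.mem_iff_getElem.1 hw
    have hlen : c.length = (goals X).length := by
      have := congrArg List.length hc
      simpa using this
    have hgk := congrArg (fun l => l[k]?) hc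
    simp only [List.getElem?_map] at hgk
    rw [List.getElem?_eq_getElem (by omega : k < c.length),
      List.getElem?_eq_getElem hk] at hgk
    simp only [Option.map_some] at hgk
    have hgk' := Option.some.inj hgk
    have e1 := congrArg Prod.fst hgk'
    have e2 := congrArg Prod.snd hgk'
    simp only [res] at e1 e2
    have hkc : k < c.length := by omega
    refine ⟨(c.get ⟨k, hkc⟩).2.1, (c.get ⟨k, hkc⟩).2.2, ?_⟩
    rw [← e1]
    exact e2

end Goals

section Computability

open Primrec in
theorem primrec_reduce {α} [Primcodable α] [DecidableEq α] :
    Primrec (FreeGroup.reduce (α := α)) := by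
  classical
  let h : List (α × Bool) → ((α × Bool) × List (α × Bool) × List (α × Bool)) → List (α × Bool) :=
    fun _ p => List.casesOn p.2.2 [p.1] fun hd tl =>
      if p.1.1 = hd.1 ∧ p.1.2 = !hd.2 then tl else p.1 :: hd :: tl
  have hh : Primrec₂ h := by
    have h1 : Primrec₂ fun (p : List (α × Bool) × ((α × Bool) × List (α × Bool) × List (α × Bool)))
        (q : (α × Bool) × List (α × Bool)) =>
        if p.2.1.1 = q.1.1 ∧ p.2.1.2 = !q.1.2 then q.2 else p.2.1 :: q.1 :: q.2 := by
      apply Primrec.ite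
      · exact PrimrecPred.and
          (Primrec.eq.comp (fst.comp (fst.comp (snd.comp fst))) (fst.comp (fst.comp snd)))
          (Primrec.eq.comp (snd.comp (fst.comp (snd.comp fst)))
            ((Primrec.dom_bool Bool.not).comp (snd.comp (fst.comp snd))))
      · exact snd.comp snd
      · exact (list_cons.comp (fst.comp (snd.comp fst))
          (list_cons.comp (fst.comp snd) (snd.comp snd)))
    exact (Primrec.list_casesOn (snd.comp (snd.comp snd))
      (list_cons.comp (fst.comp snd) (Primrec.const [])) h1).to₂
  have := Primrec.list_rec (Primrec.id (α := List (α × Bool))) (Primrec.const []) hh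
  refine this.of_eq fun L => ?_
  induction L with
  | nil => rfl
  | cons a L ih => simp only [FreeGroup.reduce, id, h] at *


open Primrec in
theorem primrec_invRev {α : Type} [Primcodable α] : Primrec (FreeGroup.invRev (α := α)) := by
  have : Primrec fun (w : List (α × Bool)) =>
      (w.map fun g => (g.1, !g.2)).reverse :=
    list_reverse.comp (list_map Primrec.id
      ((Primrec.pair (fst.comp snd) ((dom_bool Bool.not).comp (snd.comp snd)))).to₂)
  exact this.of_eq fun w => rfl

open Primrec in
theorem primrec_goals {n : ℕ} : Primrec (goals (n := n)) := by
  have : Primrec fun (X : List (List (Fin n × Bool))) =>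
      (X.map fun u => (prs n).map fun q => q :: (u ++ [(q.1, !q.2)])).flatten := by
    have hq : Primrec fun (r : (List (List (Fin n × Bool)) × List (Fin n × Bool)) ×
        (Fin n × Bool)) => r.2 :: (r.1.2 ++ [(r.2.1, !r.2.2)]) :=
      list_cons.comp snd (list_append.comp (snd.comp fst)
        (list_cons.comp (Primrec.pair (fst.comp snd) ((dom_bool Bool.not).comp (snd.comp snd)))
          (Primrec.const [])))
    have hinner : Primrec fun (p : List (List (Fin n × Bool)) × List (Fin n × Bool)) =>
        (prs n).map fun q => q :: (p.2 ++ [(q.1, !q.2)]) :=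
      list_map (Primrec.const (prs n)) hq.to₂
    exact list_flatten.comp (list_map Primrec.id hinner.to₂)
  exact this.of_eq fun X => rfl

open Primrec in
theorem primrec_evalComb {n : ℕ} :
    Primrec₂ fun (X : List (List (Fin n × Bool))) (L : List (ℕ × Bool)) =>
      evalP (fComb X) L := by
  have hfc : Primrec₂ fun (p : List (List (Fin n × Bool)) × List (ℕ × Bool)) (q : ℕ × Bool) =>
      fComb p.1 q := by
    have hget : Primrec fun (r : (List (List (Fin n × Bool)) × List (ℕ × Bool)) × ℕ × Bool) =>
        r.1.1.getD r.2.1 [] := (list_getD []).comp (fst.comp fst) (fst.comp snd)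
    exact (Primrec.cond (snd.comp snd) hget (primrec_invRev.comp hget)).to₂
  have : Primrec fun (p : List (List (Fin n × Bool)) × List (ℕ × Bool)) =>
      (p.2.map (fComb p.1)).flatten :=
    list_flatten.comp (list_map snd hfc)
  exact this.of_eq fun p => rfl

open Primrec in
theorem primrec_evalConj {n : ℕ} (R : List (List (Fin n × Bool))) :
    Primrec fun (M : List (List (Fin n × Bool) × ℕ × Bool)) => evalP (fConj R) M := by
  have hfcj : Primrec fun (t : List (Fin n × Bool) × ℕ × Bool) => fConj R t := by
    have hget : Primrec fun (t : List (Fin n × Bool) × ℕ × Bool) =>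
        R.getD t.2.1 [] := (list_getD []).comp (Primrec.const R) (fst.comp snd)
    exact list_append.comp (list_append.comp fst
      (Primrec.cond (snd.comp snd) hget (primrec_invRev.comp hget))) (primrec_invRev.comp fst)
  have : Primrec fun (M : List (List (Fin n × Bool) × ℕ × Bool)) =>
      (M.map (fConj R)).flatten :=
    list_flatten.comp (list_map Primrec.id (hfcj.comp snd).to₂)
  exact this.of_eq fun M => rfl

open Primrec in
theorem primrec_check {n : ℕ} (R : List (List (Fin n × Bool))) :
    Primrec₂ (check R) := by
  have hres : Primrec₂ fun (X : List (List (Fin n × Bool)))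
      (t : List (Fin n × Bool) × List (ℕ × Bool) × List (List (Fin n × Bool) × ℕ × Bool)) =>
      res R X t := by
    have hres' : Primrec fun (p : List (List (Fin n × Bool)) ×
        (List (Fin n × Bool) × List (ℕ × Bool) × List (List (Fin n × Bool) × ℕ × Bool))) =>
        ((p.2.1, FreeGroup.reduce (FreeGroup.invRev p.2.1 ++ evalP (fComb p.1) p.2.2.1 ++
          FreeGroup.invRev (evalP (fConj R) p.2.2.2))) :
          List (Fin n × Bool) × List (Fin n × Bool)) :=
      Primrec.pair (fst.comp snd) (primrec_reduce.comp (list_append.comp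
        (list_append.comp (primrec_invRev.comp (fst.comp snd))
          (primrec_evalComb.comp fst (fst.comp (snd.comp snd))))
        (primrec_invRev.comp ((primrec_evalConj R).comp (snd.comp (snd.comp snd))))))
    exact (hres'.of_eq fun p => rfl).to₂
  have h1 : Primrec fun (p : List (List (Fin n × Bool)) ×
      List (List (Fin n × Bool) × List (ℕ × Bool) × List (List (Fin n × Bool) × ℕ × Bool))) =>
      p.2.map (res R p.1) :=
    list_map snd (hres.comp (fst.comp fst) snd).to₂
  have h2 : Primrec fun (p : List (List (Fin n × Bool)) ×
      List (List (Fin n × Bool) × List (ℕ × Bool) × List (List (Fin n × Bool) × ℕ × Bool))) =>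
      (goals p.1).map fun w => (w, ([] : List (Fin n × Bool))) :=
    list_map (primrec_goals.comp fst) (Primrec.pair snd (Primrec.const [])).to₂
  exact (PrimrecPred.decide (Primrec.eq.comp h1 h2)).to₂


theorem re_of_exists {α β : Type} [Primcodable α] [Primcodable β] {f : α → β → Bool}
    (hf : Computable₂ f) : REPred fun a => ∃ b, f a b = true := by
  have hp : Computable₂ fun (a : α) (k : ℕ) =>
      Option.casesOn (motive := fun _ => Bool) (Encodable.decode (α := β) k) false (f a) := by
    exact Computable.option_casesOn (Computable.decode.comp Computable.snd)
      (Computable.const false) (hf.comp (Computable.fst.comp Computable.fst) Computable.snd)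
  have hrf := Partrec.rfind hp.partrec₂
  refine hrf.dom_re.of_eq fun a => ?_
  rw [Nat.rfind_dom]
  constructor
  · rintro ⟨k, hk, -⟩
    simp only [PFun.coe_val, Part.mem_some_iff] at hk
    cases hd : (Encodable.decode (α := β) k) with
    | none => rw [hd] at hk; exact absurd hk.symm (by simp)
    | some b => rw [hd] at hk; exact ⟨b, hk.symm⟩
  · rintro ⟨b, hb⟩
    refine ⟨Encodable.encode b, ?_, ?_⟩
    swap
    · intro m _
      exact trivial
    simp only [PFun.coe_val, Part.mem_some_iff, Encodable.encodek, hb]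


end Computability

end NormRE

/-- Normality of the subgroup generated by a finite list of words is recursively
enumerable. -/
theorem normality_re (n : ℕ) (R : List (List (Fin n × Bool))) :
    REPred fun X : List (List (Fin n × Bool)) =>
      Subgroup.closure {x | ∃ u ∈ X, x = wordElt R u} =
        Subgroup.normalClosure {x | ∃ u ∈ X, x = wordElt R u} := by
  have hre := NormRE.re_of_exists ((NormRE.primrec_check R).to_comp)
  exact hre.of_eq fun X => (NormRE.main_iff R X).symm
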